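/- Let k be a field and X a linearly ordered set. In the free metabelian Lie algebra L₍₂₎(X), the images of the generators x ∈ X together with the images of the regular R-words [a₀,a₁,...,aₙ] (n ≥ 1, aᵢ ∈ X, a₀ > a₁ ≤ a₂ ≤ ⋯ ≤ aₙ) form a k-linearly independent family. -/

import Mathlib

/-- The free metabelian Lie algebra on `X` over `k`. -/
abbrev FreeMetabelianLieAlgebra (k : Type u) [Field k] (X : Type v) :=
  FreeLieAlgebra k X ⧸ LieAlgebra.derivedSeries k (FreeLieAlgebra k X) 2

/-- The image of a generator `x ∈ X` in the free metabelian Lie algebra. -/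
noncomputable def FreeMetabelianLieAlgebra.of (k : Type u) [Field k] {X : Type v} (x : X) :
    FreeMetabelianLieAlgebra k X :=
  LieSubmodule.Quotient.mk (N := LieAlgebra.derivedSeries k (FreeLieAlgebra k X) 2)
    (FreeLieAlgebra.of k x)

/-- A regular `R`-word on a linearly ordered set `X`: data `a₀, a₁, …, aₙ` with `n ≥ 1`
and `a₀ > a₁ ≤ a₂ ≤ ⋯ ≤ aₙ`. -/
structure RWord (X : Type v) [LinearOrder X] where
  a₀ : X
  a₁ : X
  rest : List X
  lt : a₁ < a₀
  sorted : (a₁ :: rest).Pairwise (· ≤ ·)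

/-- The image in the free metabelian Lie algebra of a regular `R`-word, i.e. the
left-normed bracket `[a₀, a₁, …, aₙ]` of the images of its letters. -/
noncomputable def RWord.toLie (k : Type u) [Field k] {X : Type v} [LinearOrder X]
    (w : RWord X) : FreeMetabelianLieAlgebra k X :=
  ((w.a₁ :: w.rest).map (FreeMetabelianLieAlgebra.of k)).foldl (fun u v => ⁅u, v⁆)
    (FreeMetabelianLieAlgebra.of k w.a₀)


universe u' v'
universe u v
noncomputable section
namespace MetaModel
variable (k : Type u) [Field k] (X : Type v)

/-- linear polynomial attached to a finsupp -/
def lin : (X →₀ k) →ₗ[k] MvPolynomial X k :=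
  Finsupp.lsum k fun x => LinearMap.toSpanSingleton k _ (MvPolynomial.X x)

@[simp] lemma lin_single (x : X) : lin k X (Finsupp.single x 1) = MvPolynomial.X x := by
  simp [lin]

abbrev L := (X →₀ k) × (X →₀ MvPolynomial X k)

instance : LieRing (L k X) where
  bracket z w := (0, lin k X z.1 • w.2 - lin k X w.1 • z.2)
  add_lie x y z := by
    show ((0 : X →₀ k), _) = ((0 : X →₀ k), _) + ((0 : X →₀ k), _)
    simp only [Prod.mk_add_mk, Prod.mk.injEq, Prod.fst_add, Prod.snd_add, map_add,
      add_smul, smul_add, add_zero]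
    refine ⟨trivial, by abel⟩
  lie_add x y z := by
    show ((0 : X →₀ k), _) = ((0 : X →₀ k), _) + ((0 : X →₀ k), _)
    simp only [Prod.mk_add_mk, Prod.mk.injEq, Prod.fst_add, Prod.snd_add, map_add,
      add_smul, smul_add, add_zero]
    refine ⟨trivial, by abel⟩
  lie_self x := by
    show ((0 : X →₀ k), _) = (0 : L k X)
    simp [Prod.ext_iff]
  leibniz_lie x y z := by
    show ((0 : X →₀ k), _) = ((0 : X →₀ k), _) + ((0 : X →₀ k), _)
    simp only [Prod.mk_add_mk, Prod.mk.injEq, Prod.fst_add, Prod.snd_add, map_zero,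
      smul_sub, smul_smul, zero_smul, sub_zero, zero_add, zero_sub, smul_zero]
    refine ⟨trivial, ?_⟩
    rw [mul_comm (lin k X z.1) (lin k X x.1), mul_comm (lin k X y.1) (lin k X x.1),
        mul_comm (lin k X z.1) (lin k X y.1)]
    abel

instance : LieAlgebra k (L k X) where
  lie_smul t x y := by
    show ((0 : X →₀ k), _) = t • ((0 : X →₀ k), _)
    simp only [Prod.smul_mk, Prod.mk.injEq, Prod.smul_fst, Prod.smul_snd, map_smul,
      smul_zero, smul_sub]
    refine ⟨trivial, ?_⟩
    rw [smul_comm ((lin k X) x.1) t y.2, smul_assoc]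

@[simp] lemma lie_def (z w : L k X) :
    ⁅z, w⁆ = ((0 : X →₀ k), lin k X z.1 • w.2 - lin k X w.1 • z.2) := rfl

/-- images of the generators in the model -/
def eps (x : X) : L k X := (Finsupp.single x 1, Finsupp.single x 1)

/-- the Lie algebra morphism from the free Lie algebra to the model -/
def lift : FreeLieAlgebra k X →ₗ⁅k⁆ L k X := FreeLieAlgebra.lift k (eps k X)

/-- the ideal of elements with vanishing first component -/
def Pid : LieIdeal k (L k X) where
  carrier := {z | z.1 = 0}
  add_mem' := by
    intro a b ha hb
    simp only [Set.mem_setOf_eq, Prod.fst_add] at *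
    rw [ha, hb, add_zero]
  zero_mem' := rfl
  smul_mem' := by
    intro t a ha
    simp only [Set.mem_setOf_eq, Prod.smul_fst] at *
    rw [ha, smul_zero]
  lie_mem := by intro x m _; rfl

lemma derived1_le : LieAlgebra.derivedSeries k (L k X) 1 ≤ Pid k X := by
  rw [LieAlgebra.derivedSeries_def, show (1:ℕ) = 0 + 1 from rfl,
    LieAlgebra.derivedSeriesOfIdeal_succ, LieAlgebra.derivedSeriesOfIdeal_zero,
    LieSubmodule.lie_le_iff]
  intro x _ m _
  exact rfl

lemma derived2_eq_bot : LieAlgebra.derivedSeries k (L k X) 2 = ⊥ := by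
  rw [LieAlgebra.derivedSeries_def, show (2:ℕ) = 1 + 1 from rfl,
    LieAlgebra.derivedSeriesOfIdeal_succ, ← LieAlgebra.derivedSeries_def,
    LieSubmodule.lie_eq_bot_iff]
  intro x hx m hm
  have hx1 : x.1 = 0 := derived1_le k X hx
  have hm1 : m.1 = 0 := derived1_le k X hm
  rw [lie_def, hx1, hm1]
  simp [Prod.ext_iff]

lemma lift_ann : ∀ z ∈ LieAlgebra.derivedSeries k (FreeLieAlgebra k X) 2, lift k X z = 0 := by
  intro z hz
  have h1 : lift k X z ∈ LieIdeal.map (lift k X)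
      (LieAlgebra.derivedSeries k (FreeLieAlgebra k X) 2) := LieIdeal.mem_map hz
  have h2 := LieIdeal.derivedSeries_map_le (f := lift k X) 2 h1
  rw [derived2_eq_bot] at h2
  simpa using h2


/-- The free metabelian Lie algebra on `X` over `k`. -/
abbrev FreeMetabelianLieAlgebra' := FreeLieAlgebra k X ⧸ LieAlgebra.derivedSeries k (FreeLieAlgebra k X) 2

def G : (FreeLieAlgebra k X ⧸ LieAlgebra.derivedSeries k (FreeLieAlgebra k X) 2) →ₗ[k] L k X :=
  Submodule.liftQ (LieAlgebra.derivedSeries k (FreeLieAlgebra k X) 2).toSubmodule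
    (lift k X).toLinearMap (by intro z hz; exact LinearMap.mem_ker.mpr (lift_ann k X z hz))

@[simp] lemma G_mk (z : FreeLieAlgebra k X) :
    G k X (LieSubmodule.Quotient.mk
      (N := LieAlgebra.derivedSeries k (FreeLieAlgebra k X) 2) z) = lift k X z := rfl

@[simp] lemma G_of (x : X) : G k X (FreeMetabelianLieAlgebra.of k x) = eps k X x := by
  show G k X (LieSubmodule.Quotient.mk
    (N := LieAlgebra.derivedSeries k (FreeLieAlgebra k X) 2) (FreeLieAlgebra.of k x)) = _
  rw [G_mk]
  simp [lift]

lemma foldl_mk (a : FreeLieAlgebra k X) (l : List X) :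
    (l.map (fun x => LieSubmodule.Quotient.mk
        (N := LieAlgebra.derivedSeries k (FreeLieAlgebra k X) 2)
        (FreeLieAlgebra.of k x))).foldl (fun u v => ⁅u, v⁆)
      (LieSubmodule.Quotient.mk (N := LieAlgebra.derivedSeries k (FreeLieAlgebra k X) 2) a)
    = LieSubmodule.Quotient.mk (N := LieAlgebra.derivedSeries k (FreeLieAlgebra k X) 2)
        ((l.map (FreeLieAlgebra.of k)).foldl (fun u v => ⁅u, v⁆) a) := by
  induction l generalizing a with
  | nil => rfl
  | cons b l ih =>
    simp only [List.map_cons, List.foldl_cons]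
    rw [← LieSubmodule.Quotient.mk_bracket, ih]

lemma lift_foldl (a : FreeLieAlgebra k X) (l : List X) :
    lift k X ((l.map (FreeLieAlgebra.of k)).foldl (fun u v => ⁅u, v⁆) a)
    = (l.map (eps k X)).foldl (fun u v => ⁅u, v⁆) (lift k X a) := by
  induction l generalizing a with
  | nil => rfl
  | cons b l ih =>
    simp only [List.map_cons, List.foldl_cons]
    rw [ih, LieHom.map_lie]
    simp [lift]

lemma toFinsupp_cons (a : X) (s : Multiset X) [DecidableEq X] :
    (a ::ₘ s).toFinsupp = s.toFinsupp + Finsupp.single a 1 := by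
  rw [← Multiset.singleton_add, Multiset.toFinsupp_add, Multiset.toFinsupp_singleton, add_comm]

lemma model_foldl [DecidableEq X] (m : X →₀ MvPolynomial X k) (l : List X) :
    (l.map (eps k X)).foldl (fun u v => ⁅u, v⁆) ((0 : X →₀ k), m)
    = (0, ((-1 : k) ^ l.length) •
        ((MvPolynomial.monomial ((l : Multiset X).toFinsupp) (1 : k)) • m)) := by
  induction l generalizing m with
  | nil => simp
  | cons b l ih =>
    simp only [List.map_cons, List.foldl_cons]
    have hb : ⁅((0 : X →₀ k), m), eps k X b⁆
        = ((0 : X →₀ k), -((MvPolynomial.X b : MvPolynomial X k) • m)) := by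
      rw [lie_def]; simp [eps]
    rw [hb, ih]
    refine Prod.ext rfl ?_
    show ((-1 : k) ^ l.length) • _ = _
    rw [List.length_cons, pow_succ, ← Multiset.cons_coe, toFinsupp_cons,
      MvPolynomial.monomial_add_single, pow_one]
    simp only [mul_smul, neg_one_smul, smul_neg]


variable {X}
lemma G_toLie [LinearOrder X] (w : RWord X) :
    G k X (w.toLie k) = (0, ((-1 : k) ^ w.rest.length) •
      (Finsupp.single w.a₁
          (MvPolynomial.monomial ((w.a₀ ::ₘ (↑w.rest : Multiset X)).toFinsupp) (1 : k))
        - Finsupp.single w.a₀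
          (MvPolynomial.monomial ((w.a₁ ::ₘ (↑w.rest : Multiset X)).toFinsupp) (1 : k)))) := by
  rw [RWord.toLie]
  rw [show FreeMetabelianLieAlgebra.of k = fun x : X => LieSubmodule.Quotient.mk
      (N := LieAlgebra.derivedSeries k (FreeLieAlgebra k X) 2) (FreeLieAlgebra.of k x) from rfl]
  rw [foldl_mk, G_mk, lift_foldl]
  rw [show lift k X (FreeLieAlgebra.of k w.a₀) = eps k X w.a₀ from
    FreeLieAlgebra.lift_of_apply _ _]
  simp only [List.map_cons, List.foldl_cons]
  have h1 : ⁅eps k X w.a₀, eps k X w.a₁⁆ = ((0 : X →₀ k),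
      (MvPolynomial.X w.a₀ : MvPolynomial X k) • Finsupp.single w.a₁ (1 : MvPolynomial X k)
       - (MvPolynomial.X w.a₁ : MvPolynomial X k) • Finsupp.single w.a₀ (1 : MvPolynomial X k)) := by
    rw [lie_def]; simp [eps]
  rw [h1, model_foldl]
  refine Prod.ext rfl ?_
  show ((-1 : k) ^ w.rest.length) • _ = ((-1 : k) ^ w.rest.length) • _
  congr 1
  rw [smul_sub, smul_smul, smul_smul, toFinsupp_cons, toFinsupp_cons,
    MvPolynomial.monomial_add_single, MvPolynomial.monomial_add_single, pow_one, pow_one]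
  rw [Finsupp.smul_single, Finsupp.smul_single, smul_eq_mul, smul_eq_mul, mul_one, mul_one]

end MetaModel

lemma RWord.eq_of {X : Type v} [LinearOrder X] {w w' : RWord X} (h0 : w.a₀ = w'.a₀)
    (h : (w.a₁ ::ₘ (↑w.rest : Multiset X)) = (w'.a₁ ::ₘ (↑w'.rest : Multiset X))) : w = w' := by
  have hp : List.Perm (w.a₁ :: w.rest) (w'.a₁ :: w'.rest) := by
    rw [← Multiset.coe_eq_coe, ← Multiset.cons_coe, ← Multiset.cons_coe]
    exact h
  have hl : (w.a₁ :: w.rest) = (w'.a₁ :: w'.rest) :=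
    List.Perm.eq_of_pairwise' w.sorted w'.sorted hp
  cases w; cases w'
  simp_all

theorem freeMetabelian_linearIndependent (k : Type u) [Field k] (X : Type v) [LinearOrder X] :
    LinearIndependent k
      (Sum.elim (fun x : X => FreeMetabelianLieAlgebra.of k x)
        (fun w : RWord X => w.toLie k)) := by
  classical
  rw [linearIndependent_iff']
  intro s g hsum i hi
  set V : X ⊕ RWord X → FreeMetabelianLieAlgebra k X :=
    Sum.elim (fun x : X => FreeMetabelianLieAlgebra.of k x)
      (fun w : RWord X => w.toLie k) with hV
  -- Step A : generator coefficients vanish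
  have hA : ∀ x : X, Sum.inl x ∈ s → g (Sum.inl x) = 0 := by
    intro x hx
    set Θ : FreeMetabelianLieAlgebra k X →ₗ[k] k :=
      (Finsupp.lapply x).comp
        ((LinearMap.fst k (X →₀ k) (X →₀ MvPolynomial X k)).comp (MetaModel.G k X)) with hΘdef
    have hs : ∑ j ∈ s, g j • Θ (V j) = 0 := by
      have h := congrArg Θ hsum
      simpa only [map_sum, map_smul, map_zero] using h
    rw [Finset.sum_eq_single_of_mem (Sum.inl x) hx ?_] at hs
    · simp only [hΘdef, hV, Sum.elim_inl, LinearMap.comp_apply, MetaModel.G_of,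
        LinearMap.fst_apply, Finsupp.lapply_apply, MetaModel.eps,
        Finsupp.single_eq_same, smul_eq_mul, mul_one] at hs
      exact hs
    · intro b hb hbx
      match b with
      | Sum.inl y =>
        have hyx : y ≠ x := fun h => hbx (by rw [h])
        simp only [hΘdef, hV, Sum.elim_inl, LinearMap.comp_apply, MetaModel.G_of,
          LinearMap.fst_apply, Finsupp.lapply_apply, MetaModel.eps,
          Finsupp.single_eq_of_ne' hyx, smul_zero]
      | Sum.inr w =>
        simp only [hΘdef, hV, Sum.elim_inr, LinearMap.comp_apply, MetaModel.G_toLie,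
          LinearMap.fst_apply, Finsupp.lapply_apply, Finsupp.coe_zero, Pi.zero_apply, smul_zero]
  -- Step B : word coefficients vanish
  have hB : ∀ w : RWord X, Sum.inr w ∈ s → g (Sum.inr w) = 0 := by
    intro w hw
    by_contra hne
    set M : Multiset X := w.a₀ ::ₘ w.a₁ ::ₘ (↑w.rest : Multiset X) with hM
    set key : X ⊕ RWord X → X := Sum.elim (fun _ => w.a₀) (fun w' => w'.a₀) with hkey
    set T : Finset (X ⊕ RWord X) := s.filter (fun j => g j ≠ 0 ∧ ∃ w' : RWord X,
      j = Sum.inr w' ∧ (w'.a₀ ::ₘ w'.a₁ ::ₘ (↑w'.rest : Multiset X)) = M) with hT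
    have hwT : Sum.inr w ∈ T := by
      rw [hT, Finset.mem_filter]
      exact ⟨hw, hne, w, rfl, rfl⟩
    have hTne : (T.image key).Nonempty := ⟨key (Sum.inr w), Finset.mem_image_of_mem _ hwT⟩
    obtain ⟨j, hjT, hja⟩ := Finset.mem_image.mp ((T.image key).max'_mem hTne)
    have hmax : ∀ j' ∈ T, key j' ≤ (T.image key).max' hTne := fun j' hj' =>
      Finset.le_max' _ _ (Finset.mem_image_of_mem _ hj')
    obtain ⟨hjs, hgj, w', rfl, hw'M⟩ := Finset.mem_filter.mp hjT
    have hkj : w'.a₀ = (T.image key).max' hTne := hja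
    set d : X →₀ ℕ := (w'.a₁ ::ₘ (↑w'.rest : Multiset X)).toFinsupp with hd
    set Θ : FreeMetabelianLieAlgebra k X →ₗ[k] k :=
      (MvPolynomial.lcoeff (R := k) d).comp
        ((Finsupp.lapply w'.a₀).comp
          ((LinearMap.snd k (X →₀ k) (X →₀ MvPolynomial X k)).comp (MetaModel.G k X))) with hΘdef
    have hs : ∑ j' ∈ s, g j' • Θ (V j') = 0 := by
      have h := congrArg Θ hsum
      simpa only [map_sum, map_smul, map_zero] using h
    rw [Finset.sum_eq_single_of_mem (Sum.inr w') hjs ?_] at hs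
    · have hΘw' : Θ (V (Sum.inr w')) = -((-1 : k) ^ w'.rest.length) := by
        simp only [hΘdef, hV, Sum.elim_inr, LinearMap.comp_apply, MetaModel.G_toLie,
          LinearMap.snd_apply, Finsupp.lapply_apply, Finsupp.smul_apply, Finsupp.sub_apply,
          Finsupp.single_eq_of_ne' (ne_of_lt w'.lt), Finsupp.single_eq_same,
          zero_sub, map_smul, map_neg, ← hd, MvPolynomial.lcoeff_apply,
          MvPolynomial.coeff_monomial, eq_self_iff_true, if_true, smul_eq_mul, mul_neg, mul_one]
      rw [hΘw'] at hs
      have hnz : -((-1 : k) ^ w'.rest.length) ≠ 0 :=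
        neg_ne_zero.mpr (pow_ne_zero _ (neg_ne_zero.mpr one_ne_zero))
      rw [smul_eq_mul, mul_eq_zero] at hs
      rcases hs with h | h
      · exact hgj h
      · exact hnz h
    · intro b hb hbne
      match b with
      | Sum.inl y => rw [hA y hb, zero_smul]
      | Sum.inr w'' =>
        by_cases hg'' : g (Sum.inr w'') = 0
        · rw [hg'', zero_smul]
        · have hΘ0 : Θ (V (Sum.inr w'')) = 0 := by
            simp only [hΘdef, hV, Sum.elim_inr, LinearMap.comp_apply, MetaModel.G_toLie,
              LinearMap.snd_apply, Finsupp.lapply_apply, Finsupp.smul_apply, Finsupp.sub_apply,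
              map_smul, map_sub, MvPolynomial.lcoeff_apply, smul_eq_mul]
            have hpos : w''.a₁ ≠ w'.a₀ ∨
                (w''.a₁ = w'.a₀ ∧
                  (w''.a₀ ::ₘ (↑w''.rest : Multiset X)).toFinsupp ≠ d) := by
              by_cases h1 : w''.a₁ = w'.a₀
              · right
                refine ⟨h1, ?_⟩
                intro habs
                have hms : (w''.a₀ ::ₘ (↑w''.rest : Multiset X))
                    = (w'.a₁ ::ₘ (↑w'.rest : Multiset X)) :=
                  Multiset.toFinsupp.injective (by rw [habs, hd])
                have hMM : (w''.a₀ ::ₘ w''.a₁ ::ₘ (↑w''.rest : Multiset X)) = M := by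
                  rw [Multiset.cons_swap, h1, hms, ← hw'M]
                have hT'' : Sum.inr w'' ∈ T := by
                  rw [hT, Finset.mem_filter]
                  exact ⟨hb, hg'', w'', rfl, hMM⟩
                have hle : w''.a₀ ≤ w'.a₀ := by
                  rw [hkj]; exact hmax _ hT''
                have hgt : w'.a₀ < w''.a₀ := h1 ▸ w''.lt
                exact absurd hle (not_le.mpr hgt)
              · left; exact h1
            have hneg : w''.a₀ ≠ w'.a₀ ∨
                (w''.a₀ = w'.a₀ ∧
                  (w''.a₁ ::ₘ (↑w''.rest : Multiset X)).toFinsupp ≠ d) := by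
              by_cases h1 : w''.a₀ = w'.a₀
              · right
                refine ⟨h1, ?_⟩
                intro habs
                have hms : (w''.a₁ ::ₘ (↑w''.rest : Multiset X))
                    = (w'.a₁ ::ₘ (↑w'.rest : Multiset X)) :=
                  Multiset.toFinsupp.injective (by rw [habs, hd])
                exact hbne (by rw [RWord.eq_of h1 hms])
              · left; exact h1
            rw [Finsupp.single_apply, Finsupp.single_apply]
            rcases hpos with h | ⟨h1, h2⟩ <;> rcases hneg with h' | ⟨h1', h2'⟩
            · rw [if_neg h, if_neg h']; simp
            · rw [if_neg h, if_pos h1', MvPolynomial.coeff_monomial, if_neg h2']; simp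
            · rw [if_pos h1, if_neg h', MvPolynomial.coeff_monomial, if_neg h2]; simp
            · rw [if_pos h1, if_pos h1', MvPolynomial.coeff_monomial,
                MvPolynomial.coeff_monomial, if_neg h2, if_neg h2']; simp
          rw [hΘ0, smul_zero]
  match i with
  | Sum.inl x => exact hA x hi
  | Sum.inr w => exact hB w hi
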